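/- The function α ↦ 2(1+α²)Φ(−α) − 2αφ(α) is strictly decreasing on [0,∞), equals 1 at α = 0, and tends to 0 as α → ∞. -/

import Mathlib

open Real MeasureTheory Set Filter

/-- Standard Gaussian density φ. -/
noncomputable def stdGaussPDF (z : ℝ) : ℝ := Real.exp (-z^2/2) / Real.sqrt (2*Real.pi)

/-- Standard Gaussian CDF Φ. -/
noncomputable def stdGaussCDF (z : ℝ) : ℝ := ∫ u in Set.Iic z, stdGaussPDF u

lemma sqrt_two_pi_pos : 0 < Real.sqrt (2*Real.pi) :=
  Real.sqrt_pos.2 (by positivity)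

lemma pdf_pos (z : ℝ) : 0 < stdGaussPDF z :=
  div_pos (Real.exp_pos _) sqrt_two_pi_pos

lemma pdf_even (z : ℝ) : stdGaussPDF (-z) = stdGaussPDF z := by
  simp [stdGaussPDF, neg_sq]

lemma pdf_cont : Continuous stdGaussPDF := by
  unfold stdGaussPDF
  fun_prop

lemma pdf_eq (z : ℝ) : stdGaussPDF z = Real.exp (-(1/2) * z^2) / Real.sqrt (2*Real.pi) := by
  unfold stdGaussPDF; ring_nf

lemma pdf_integrable : Integrable stdGaussPDF := by
  have h := (integrable_exp_neg_mul_sq (b := 1/2) (by norm_num)).div_const (Real.sqrt (2*Real.pi))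
  exact h.congr (by
    filter_upwards with x
    rw [pdf_eq])

lemma id_pdf_integrable : Integrable (fun u : ℝ => u * stdGaussPDF u) := by
  have h := (integrable_mul_exp_neg_mul_sq (b := 1/2) (by norm_num)).div_const
    (Real.sqrt (2*Real.pi))
  exact h.congr (by
    filter_upwards with x
    rw [pdf_eq]; ring)

lemma pdf_hasDerivAt (x : ℝ) : HasDerivAt stdGaussPDF (-x * stdGaussPDF x) x := by
  have h1 : HasDerivAt (fun z : ℝ => -z^2/2) (-x) x := by
    have := ((hasDerivAt_pow 2 x).neg).div_const 2
    refine this.congr_deriv ?_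
    ring
  have h2 := (h1.exp).div_const (Real.sqrt (2*Real.pi))
  refine h2.congr_deriv ?_
  unfold stdGaussPDF
  ring

lemma integral_id_pdf_Iic (b : ℝ) :
    ∫ u in Set.Iic b, u * stdGaussPDF u = - stdGaussPDF b := by
  have h : ∫ u in Set.Iic b, u * stdGaussPDF u = (- stdGaussPDF b) - 0 := by
    apply integral_Iic_of_hasDerivAt_of_tendsto'
      (f := fun u => - stdGaussPDF u)
    · intro x _
      have := (pdf_hasDerivAt x).neg
      exact this.congr_deriv (by ring)
    · exact id_pdf_integrable.integrableOn
    · have : Tendsto stdGaussPDF atBot (nhds 0) := by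
        have h1 : Tendsto (fun z : ℝ => -z^2/2) atBot atBot := by
          apply tendsto_atBot_mono' _ _ tendsto_id
          filter_upwards [eventually_le_atBot (-2 : ℝ)] with z hz
          have h0 : 0 ≤ (-z) * (-(z+2)) := mul_nonneg (by linarith) (by linarith)
          simp only [id_eq]
          nlinarith
        have h2 := (Real.tendsto_exp_atBot.comp h1).div_const (Real.sqrt (2*Real.pi))
        rw [zero_div] at h2
        exact h2.congr (fun x => by simp only [Function.comp_apply, stdGaussPDF])
      simpa using this.neg
  simpa using h

lemma integral_pdf_total : ∫ u, stdGaussPDF u = 1 := by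
  have h : ∫ u : ℝ, Real.exp (-(1/2) * u^2) = Real.sqrt (Real.pi / (1/2)) :=
    integral_gaussian (1/2)
  have h2 : ∫ u, stdGaussPDF u = (∫ u : ℝ, Real.exp (-(1/2) * u^2)) / Real.sqrt (2*Real.pi) := by
    rw [← integral_div]
    congr 1 with u
    rw [pdf_eq]
  rw [h2, h]
  rw [div_eq_one_iff_eq (ne_of_gt sqrt_two_pi_pos)]
  congr 1
  ring

lemma cdf_zero : stdGaussCDF 0 = 1/2 := by
  have hsym : stdGaussCDF 0 = ∫ u in Set.Ioi (0:ℝ), stdGaussPDF u := by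
    unfold stdGaussCDF
    rw [show (0:ℝ) = -0 by norm_num, ← integral_comp_neg_Iic]
    simp [pdf_even]
  have hsplit : stdGaussCDF 0 + ∫ u in Set.Ioi (0:ℝ), stdGaussPDF u = 1 := by
    unfold stdGaussCDF
    rw [intervalIntegral.integral_Iic_add_Ioi pdf_integrable.integrableOn
      pdf_integrable.integrableOn, integral_pdf_total]
  rw [← hsym] at hsplit
  linarith

lemma cdf_hasDerivAt (x : ℝ) : HasDerivAt stdGaussCDF (stdGaussPDF x) x := by
  have heq : ∀ y : ℝ, stdGaussCDF y = stdGaussCDF 0 + ∫ t in (0:ℝ)..y, stdGaussPDF t := by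
    intro y
    have := intervalIntegral.integral_Iic_sub_Iic (μ := volume) (f := stdGaussPDF)
      pdf_integrable.integrableOn pdf_integrable.integrableOn (a := 0) (b := y)
    unfold stdGaussCDF
    linarith [this]
  have hd : HasDerivAt (fun y => stdGaussCDF 0 + ∫ t in (0:ℝ)..y, stdGaussPDF t)
      (stdGaussPDF x) x := by
    apply HasDerivAt.const_add
    exact intervalIntegral.integral_hasDerivAt_right
      pdf_integrable.intervalIntegrable
      (pdf_cont.stronglyMeasurableAtFilter _ _)
      pdf_cont.continuousAt
  exact hd.congr_of_eventuallyEq (by filter_upwards with y; rw [heq])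

lemma cdf_nonneg (x : ℝ) : 0 ≤ stdGaussCDF x :=
  integral_nonneg fun u => (pdf_pos u).le

/-- Strict Mills inequality. -/
lemma mills (α : ℝ) (hα : 0 < α) : α * stdGaussCDF (-α) < stdGaussPDF α := by
  have key : 0 < ∫ u in Set.Iic (-α), (-(α + u)) * stdGaussPDF u := by
    rw [setIntegral_pos_iff_support_of_nonneg_ae]
    · refine lt_of_lt_of_le ?_ (measure_mono (?_ : Set.Iio (-α) ⊆ _))
      · simp [Real.volume_Iio]
      · intro u hu
        have hu' : u < -α := hu
        constructor
        · simp only [Function.mem_support]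
          exact ne_of_gt (mul_pos (by linarith : (0:ℝ) < -(α + u)) (pdf_pos u))
        · exact le_of_lt hu' 
    · filter_upwards [ae_restrict_mem measurableSet_Iic] with u hu
      have hu' : u ≤ -α := hu
      exact mul_nonneg (by linarith : (0:ℝ) ≤ -(α + u)) (pdf_pos u).le
    · apply Integrable.integrableOn
      have : (fun u : ℝ => (-(α + u)) * stdGaussPDF u)
          = fun u => (-α) * stdGaussPDF u + (-1) * (u * stdGaussPDF u) := by
        funext u; ring
      rw [this]
      exact ((pdf_integrable.const_mul _).add (id_pdf_integrable.const_mul _))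
  have hcalc : ∫ u in Set.Iic (-α), (-(α + u)) * stdGaussPDF u
      = stdGaussPDF α - α * stdGaussCDF (-α) := by
    have : (fun u : ℝ => (-(α + u)) * stdGaussPDF u)
        = fun u => (-α) * stdGaussPDF u - u * stdGaussPDF u := by
      funext u; ring
    rw [this, integral_sub ((pdf_integrable.integrableOn).const_mul _)
      id_pdf_integrable.integrableOn, MeasureTheory.integral_const_mul, integral_id_pdf_Iic,
      pdf_even]
    unfold stdGaussCDF
    ring
  linarith [key, hcalc ▸ key]

noncomputable def msefun (α : ℝ) : ℝ :=
  2*(1+α^2) * stdGaussCDF (-α) - 2*α * stdGaussPDF α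

lemma msefun_hasDerivAt (x : ℝ) :
    HasDerivAt msefun (4 * (x * stdGaussCDF (-x) - stdGaussPDF x)) x := by
  have h1 : HasDerivAt (fun α : ℝ => stdGaussCDF (-α)) (-stdGaussPDF (-x)) x := by
    have := (cdf_hasDerivAt (-x)).comp x (hasDerivAt_neg x)
    exact this.congr_deriv (by ring)
  have h2 : HasDerivAt (fun α : ℝ => 2*(1+α^2)) (4*x) x := by
    have := ((hasDerivAt_pow 2 x).const_add 1).const_mul 2
    refine this.congr_deriv ?_
    ring
  have h3 : HasDerivAt (fun α : ℝ => 2*(1+α^2) * stdGaussCDF (-α))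
      (4*x * stdGaussCDF (-x) + 2*(1+x^2) * (-stdGaussPDF (-x))) x := h2.mul h1
  have h4 : HasDerivAt (fun α : ℝ => 2*α * stdGaussPDF α)
      (2 * stdGaussPDF x + 2*x * (-x * stdGaussPDF x)) x := by
    have := ((hasDerivAt_id x).const_mul 2).mul (pdf_hasDerivAt x)
    refine this.congr_deriv ?_
    simp only [id_eq]
    ring
  have := h3.sub h4
  refine this.congr_deriv ?_
  rw [pdf_even]
  ring

lemma tendsto_mul_pdf : Tendsto (fun α : ℝ => α * stdGaussPDF α) atTop (nhds 0) := by
  have hb : Tendsto (fun α : ℝ => Real.exp (α - α^2/2) / Real.sqrt (2*Real.pi)) atTop (nhds 0) := by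
    have h1 : Tendsto (fun α : ℝ => α - α^2/2) atTop atBot := by
      apply tendsto_atBot_mono' _ _ tendsto_neg_atTop_atBot
      filter_upwards [eventually_ge_atTop (4 : ℝ)] with z hz
      nlinarith
    have := (Real.tendsto_exp_atBot.comp h1).div_const (Real.sqrt (2*Real.pi))
    simpa [Function.comp] using this
  apply tendsto_of_tendsto_of_tendsto_of_le_of_le' tendsto_const_nhds hb
  · filter_upwards [eventually_ge_atTop (0 : ℝ)] with α hα
    exact mul_nonneg hα (pdf_pos α).le
  · filter_upwards [eventually_ge_atTop (0 : ℝ)] with α hα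
    have h1 : α ≤ Real.exp α := by linarith [Real.add_one_le_exp α]
    have h2 : Real.exp (α - α^2/2) = Real.exp α * Real.exp (-α^2/2) := by
      rw [← Real.exp_add]; ring_nf
    unfold stdGaussPDF
    rw [h2, mul_div_assoc]
    exact mul_le_mul_of_nonneg_right h1 (by positivity)

/-- α ↦ 2(1+α²)Φ(−α) − 2αφ(α) is strictly decreasing on [0,∞), equals 1 at 0,
and tends to 0 at ∞. -/
theorem zero_signal_mse_properties :
    StrictAntiOn (fun α : ℝ => 2*(1+α^2) * stdGaussCDF (-α) - 2*α * stdGaussPDF α)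
      (Set.Ici 0) ∧
    (2*(1+(0:ℝ)^2) * stdGaussCDF (-(0:ℝ)) - 2*(0:ℝ) * stdGaussPDF 0 = 1) ∧
    Filter.Tendsto (fun α : ℝ => 2*(1+α^2) * stdGaussCDF (-α) - 2*α * stdGaussPDF α)
      Filter.atTop (nhds 0) := by
  refine ⟨?_, ?_, ?_⟩
  · show StrictAntiOn msefun (Set.Ici 0)
    have hdiff : Differentiable ℝ msefun := fun x => (msefun_hasDerivAt x).differentiableAt
    apply strictAntiOn_of_deriv_neg (convex_Ici 0) hdiff.continuous.continuousOn
    intro x hx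
    rw [interior_Ici] at hx
    rw [(msefun_hasDerivAt x).deriv]
    have := mills x hx
    linarith
  · simp only [neg_zero]
    rw [cdf_zero]
    norm_num
  · have hB : Tendsto (fun α : ℝ => 2*α * stdGaussPDF α) atTop (nhds 0) := by
      have := tendsto_mul_pdf.const_mul 2
      simp only [mul_zero] at this
      exact this.congr (fun α => by ring)
    have hA : Tendsto (fun α : ℝ => 2*(1+α^2) * stdGaussCDF (-α)) atTop (nhds 0) := by
      have hub : Tendsto (fun α : ℝ => 4 * (α * stdGaussPDF α)) atTop (nhds 0) := by
        have := tendsto_mul_pdf.const_mul 4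
        simpa using this
      apply tendsto_of_tendsto_of_tendsto_of_le_of_le' tendsto_const_nhds hub
      · filter_upwards with α
        exact mul_nonneg (by positivity) (cdf_nonneg _)
      · filter_upwards [eventually_ge_atTop (1:ℝ)] with α hα
        have hm := (mills α (by linarith)).le
        have hΦ := cdf_nonneg (-α)
        have hp := (pdf_pos α).le
        nlinarith [mul_le_mul_of_nonneg_left hm (by linarith : (0:ℝ) ≤ 4*α),
          mul_nonneg (by nlinarith : (0:ℝ) ≤ 2*α^2 - 2) hΦ]
    have := hA.sub hB
    simpa using this
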